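/- Let s = (1, 2, …, n) and s* = (1, 2, …, n, 1). For every lattice point x = (x_1,…,x_n,x_{n+1}) ∈ Par_{s*} ∩ ℤ^{n+1}, define z_i = (−x_i) mod i for 1 ≤ i ≤ n (so z_i ∈ {0,…,i−1}). Then the last coordinate x_{n+1} equals the number of (regular) ascents of the sequence (z_1,…,z_n), which also equals the number of (regular) descents of the reversed sequence (z_n,…,z_1). Moreover, the map x ↦ (z_n, z_{n−1}, …, z_1) is a bijection from Par_{s*} ∩ ℤ^{n+1} onto the set of inversion sequences of length n. -/

import Mathlib

/-- The generator vectors of the s-lecture hall parallelepiped: `lhVec s j` has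
`i`-th coordinate `s i` for `i ≥ j` and `0` for `i < j`. -/
def lhVec {n : ℕ} (s : Fin n → ℕ) (j : Fin n) : Fin n → ℝ :=
  fun i => if j ≤ i then (s i : ℝ) else 0

/-- The s-lecture hall parallelepiped: the half-open parallelepiped generated by
the vectors `lhVec s j`. -/
def lhPar {n : ℕ} (s : Fin n → ℕ) : Set (Fin n → ℝ) :=
  {x | ∃ c : Fin n → ℝ, (∀ j, 0 ≤ c j ∧ c j < 1) ∧ x = ∑ j, c j • lhVec s j}

/-- `lhEll S i` is the number of lattice points of `S ⊆ ℝ^N` whose last coordinate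
equals `i`. -/
noncomputable def lhEll {N : ℕ} (S : Set (Fin N → ℝ)) (i : ℕ) : ℕ :=
  Set.ncard {x : Fin N → ℤ | (fun k => (x k : ℝ)) ∈ S ∧
    ∀ j : Fin N, (j : ℕ) = N - 1 → x j = (i : ℤ)}

/-- The number of s-descents of `r`: indices `i` with `r i / s i > r (i+1) / s (i+1)`. -/
noncomputable def sDes {N : ℕ} (s : Fin N → ℕ) (r : Fin N → ℤ) : ℕ :=
  Set.ncard {i : Fin N | ∃ h : (i : ℕ) + 1 < N,
    (r i : ℚ) / (s i : ℚ) > (r ⟨(i : ℕ) + 1, h⟩ : ℚ) / (s ⟨(i : ℕ) + 1, h⟩ : ℚ)}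

/-- The number of s-ascents of `r`: indices `i` with `r i / s i < r (i+1) / s (i+1)`. -/
noncomputable def sAsc {N : ℕ} (s : Fin N → ℕ) (r : Fin N → ℤ) : ℕ :=
  Set.ncard {i : Fin N | ∃ h : (i : ℕ) + 1 < N,
    (r i : ℚ) / (s i : ℚ) < (r ⟨(i : ℕ) + 1, h⟩ : ℚ) / (s ⟨(i : ℕ) + 1, h⟩ : ℚ)}

/-- The number of (regular) descents of `r`: indices `i` with `r i > r (i+1)`. -/
noncomputable def rDes {N : ℕ} (r : Fin N → ℤ) : ℕ :=
  Set.ncard {i : Fin N | ∃ h : (i : ℕ) + 1 < N, r ⟨(i : ℕ) + 1, h⟩ < r i}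

/-- The number of (regular) ascents of `r`: indices `i` with `r i < r (i+1)`. -/
noncomputable def rAsc {N : ℕ} (r : Fin N → ℤ) : ℕ :=
  Set.ncard {i : Fin N | ∃ h : (i : ℕ) + 1 < N, r i < r ⟨(i : ℕ) + 1, h⟩}

/-- The number of s-descents of `r` at positions strictly before position `i`. -/
noncomputable def sDesLt {N : ℕ} (s : Fin N → ℕ) (r : Fin N → ℤ) (i : Fin N) : ℕ :=
  Set.ncard {j : Fin N | (j : ℕ) < (i : ℕ) ∧ ∃ h : (j : ℕ) + 1 < N,
    (r j : ℚ) / (s j : ℚ) > (r ⟨(j : ℕ) + 1, h⟩ : ℚ) / (s ⟨(j : ℕ) + 1, h⟩ : ℚ)}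

/-- `lhPsi s` is the set `Ψ_n = {0,…,s 0 − 1} × ⋯ × {0,…,s (n-1) − 1}`. -/
def lhPsi {n : ℕ} (s : Fin n → ℕ) : Set (Fin n → ℤ) :=
  {r | ∀ i, 0 ≤ r i ∧ r i < (s i : ℤ)}

/-- `inDilate s t lam` says that the lattice point `lam` satisfies
`0 ≤ lam 0 / s 0 ≤ lam 1 / s 1 ≤ ⋯ ≤ lam (n-1) / s (n-1) ≤ t`,
i.e. lies in the `t`-th dilate of the s-lecture hall polytope. -/
def inDilate {n : ℕ} (s : Fin n → ℕ) (t : ℕ) (lam : Fin n → ℤ) : Prop :=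
  (∀ i : Fin n, (i : ℕ) = 0 → 0 ≤ (lam i : ℚ) / (s i : ℚ)) ∧
  (∀ i : Fin n, ∀ h : (i : ℕ) + 1 < n,
    (lam i : ℚ) / (s i : ℚ) ≤ (lam ⟨(i : ℕ) + 1, h⟩ : ℚ) / (s ⟨(i : ℕ) + 1, h⟩ : ℚ)) ∧
  (∀ i : Fin n, (i : ℕ) = n - 1 → (lam i : ℚ) / (s i : ℚ) ≤ (t : ℚ))

/- auxiliary lemmas -/
lemma lh19.ncard_setOf_fin {n : ℕ} (p : ℕ → Prop) [DecidablePred p] :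
    {i : Fin n | p i.val}.ncard = ((Finset.range n).filter p).card := by
  have h1 : {i : Fin n | p i.val} = ↑(Finset.univ.filter (fun i : Fin n => p i.val)) := by
    ext i; simp
  have h2 : (Finset.univ.filter (fun i : Fin n => p i.val)).image Fin.val
      = (Finset.range n).filter p := by
    ext j
    simp only [Finset.mem_image, Finset.mem_filter, Finset.mem_univ, true_and,
      Finset.mem_range]
    constructor
    · rintro ⟨i, hp, rfl⟩; exact ⟨i.isLt, hp⟩
    · rintro ⟨hj, hp⟩; exact ⟨⟨j, hj⟩, hp, rfl⟩
  rw [h1, Set.ncard_coe_finset, ← h2, Finset.card_image_of_injective _ Fin.val_injective]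

lemma lh19.lhSum_apply {N : ℕ} (s : Fin N → ℕ) (c : Fin N → ℝ) (i : Fin N) :
    (∑ j, c j • lhVec s j) i = (∑ j ∈ Finset.Iic i, c j) * (s i : ℝ) := by
  rw [Finset.sum_apply, Finset.sum_mul]
  rw [← Finset.sum_subset (Finset.subset_univ (Finset.Iic i))]
  · apply Finset.sum_congr rfl
    intro j hj
    simp only [Finset.mem_Iic] at hj
    simp [lhVec, hj]
  · intro j _ hj
    simp only [Finset.mem_Iic] at hj
    simp [lhVec, hj]

lemma lh19.Iic_succ_eq {N : ℕ} (i : Fin N) :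
    Finset.Iic (i.succ : Fin (N+1)) = insert i.succ (Finset.Iic i.castSucc) := by
  rw [show Finset.Iic i.castSucc = Finset.Iio i.succ from rfl, Finset.Iio_insert]

lemma lh19.Iic_zero {N : ℕ} : Finset.Iic (0 : Fin (N+1)) = {0} := by
  ext j; simp [Fin.le_zero_iff]

lemma lh19.mem_lhPar_iff {N : ℕ} (s : Fin (N+1) → ℕ) (hs : ∀ i, 0 < s i)
    (x : Fin (N+1) → ℤ) :
    ((fun k => (x k : ℝ)) ∈ lhPar s) ↔
      ((0 ≤ x 0 ∧ x 0 < (s 0 : ℤ)) ∧ ∀ i : Fin N,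
        0 ≤ (s i.castSucc : ℤ) * x i.succ - (s i.succ : ℤ) * x i.castSucc ∧
        (s i.castSucc : ℤ) * x i.succ - (s i.succ : ℤ) * x i.castSucc
          < (s i.castSucc : ℤ) * (s i.succ : ℤ)) := by
  have hs' : ∀ i, (0:ℝ) < (s i : ℝ) := fun i => by exact_mod_cast hs i
  constructor
  · rintro ⟨c, hc, hx⟩
    have hT : ∀ i, (x i : ℝ) = (∑ j ∈ Finset.Iic i, c j) * (s i : ℝ) := by
      intro i
      have := congrFun hx i
      rw [this, lh19.lhSum_apply]
    constructor
    · have h0 : (x 0 : ℝ) = c 0 * (s 0 : ℝ) := by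
        rw [hT 0]; congr 1
        rw [lh19.Iic_zero, Finset.sum_singleton]
      have h1 := (hc 0).1; have h2 := (hc 0).2
      constructor
      · exact_mod_cast (h0 ▸ mul_nonneg h1 (hs' 0).le : (0:ℝ) ≤ (x 0 : ℝ))
      · have : (x 0 : ℝ) < (s 0 : ℝ) := by
          rw [h0]
          nlinarith [hs' 0]
        exact_mod_cast this
    · intro i
      have hsum : (∑ j ∈ Finset.Iic i.succ, c j)
          = c i.succ + ∑ j ∈ Finset.Iic i.castSucc, c j := by
        rw [lh19.Iic_succ_eq, Finset.sum_insert]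
        simp [Fin.lt_def]
      have key : ((s i.castSucc : ℤ) * x i.succ - (s i.succ : ℤ) * x i.castSucc : ℝ)
          = c i.succ * ((s i.castSucc : ℝ) * (s i.succ : ℝ)) := by
        push_cast
        rw [hT i.succ, hT i.castSucc, hsum]
        ring
      have h1 := (hc i.succ).1; have h2 := (hc i.succ).2
      have hP : (0:ℝ) < (s i.castSucc : ℝ) * (s i.succ : ℝ) :=
        mul_pos (hs' _) (hs' _)
      constructor
      · have : (0:ℝ) ≤ ((s i.castSucc : ℤ) * x i.succ - (s i.succ : ℤ) * x i.castSucc : ℝ) := by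
          rw [key]; exact mul_nonneg h1 hP.le
        exact_mod_cast this
      · have : ((s i.castSucc : ℤ) * x i.succ - (s i.succ : ℤ) * x i.castSucc : ℝ)
            < (s i.castSucc : ℝ) * (s i.succ : ℝ) := by
          rw [key]; nlinarith
        push_cast at this ⊢
        exact_mod_cast this
  · rintro ⟨⟨h00, h01⟩, hstep⟩
    refine ⟨Fin.cases ((x 0 : ℝ) / (s 0 : ℝ))
      (fun i => (x i.succ : ℝ) / (s i.succ : ℝ) - (x i.castSucc : ℝ) / (s i.castSucc : ℝ)), ?_, ?_⟩
    · intro j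
      induction j using Fin.cases with
      | zero =>
        simp only [Fin.cases_zero]
        constructor
        · apply div_nonneg _ (hs' 0).le; exact_mod_cast h00
        · rw [div_lt_one (hs' 0)]; exact_mod_cast h01
      | succ i =>
        simp only [Fin.cases_succ]
        have h1 := (hstep i).1; have h2 := (hstep i).2
        have h1' : (0:ℝ) ≤ (s i.castSucc : ℝ) * (x i.succ : ℝ) - (s i.succ : ℝ) * (x i.castSucc : ℝ) := by
          exact_mod_cast h1
        have h2' : (s i.castSucc : ℝ) * (x i.succ : ℝ) - (s i.succ : ℝ) * (x i.castSucc : ℝ)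
            < (s i.castSucc : ℝ) * (s i.succ : ℝ) := by exact_mod_cast h2
        have ha := hs' i.castSucc; have hb := hs' i.succ
        constructor
        · rw [sub_nonneg, div_le_div_iff₀ ha hb]
          nlinarith
        · rw [div_sub_div _ _ hb.ne' ha.ne', div_lt_one (mul_pos hb ha)]
          nlinarith
    · funext i
      rw [lh19.lhSum_apply]
      have : ∀ k : Fin (N+1), (∑ j ∈ Finset.Iic k, (Fin.cases ((x 0 : ℝ) / (s 0 : ℝ))
          (fun i => (x i.succ : ℝ) / (s i.succ : ℝ) - (x i.castSucc : ℝ) / (s i.castSucc : ℝ))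
          : Fin (N+1) → ℝ) j) = (x k : ℝ) / (s k : ℝ) := by
        intro k
        induction k using Fin.induction with
        | zero =>
          rw [lh19.Iic_zero, Finset.sum_singleton]
          rfl
        | succ i ih =>
          rw [lh19.Iic_succ_eq, Finset.sum_insert (by simp [Fin.lt_def]), ih]
          simp only [Fin.cases_succ]
          ring
      rw [this i, div_mul_cancel₀]
      exact (hs' i).ne'

lemma lh19.mem_iff' (n : ℕ) (x : Fin (n+1) → ℤ) :
    ((fun k => (x k : ℝ)) ∈ lhPar (Fin.snoc (fun i : Fin n => (i:ℕ)+1) 1)) ↔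
    (x ⟨0, by omega⟩ = 0 ∧
     (∀ i : ℕ, ∀ _h : i + 1 < n,
        0 ≤ ((i:ℤ)+1) * x ⟨i+1, by omega⟩ - ((i:ℤ)+2) * x ⟨i, by omega⟩ ∧
        ((i:ℤ)+1) * x ⟨i+1, by omega⟩ - ((i:ℤ)+2) * x ⟨i, by omega⟩ < ((i:ℤ)+1)*((i:ℤ)+2)) ∧
     (∀ _h : 0 < n,
        0 ≤ (n:ℤ) * x ⟨n, by omega⟩ - x ⟨n-1, by omega⟩ ∧
        (n:ℤ) * x ⟨n, by omega⟩ - x ⟨n-1, by omega⟩ < (n:ℤ))) := by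
  set s : Fin (n+1) → ℕ := Fin.snoc (fun i : Fin n => (i:ℕ)+1) 1 with hsdef
  have hsc : ∀ i : Fin n, s i.castSucc = (i:ℕ)+1 := fun i => by
    simp [hsdef]
  have hslast : s (Fin.last n) = 1 := by simp [hsdef]
  have hs : ∀ i, 0 < s i := by
    intro i
    induction i using Fin.lastCases with
    | last => omega
    | cast i => rw [hsc]; omega
  have hs0 : s 0 = 1 := by
    rcases n with _ | m
    · exact hslast
    · have h0 : (0 : Fin (m+1+1)) = (⟨0, Nat.succ_pos m⟩ : Fin (m+1)).castSucc := rfl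
      rw [h0, hsc]
  have hss : ∀ (i : Fin n), (i:ℕ)+1 < n → s i.succ = (i:ℕ)+2 := by
    intro i h
    have : i.succ = (⟨(i:ℕ)+1, h⟩ : Fin n).castSucc := by
      ext; simp
    rw [this, hsc]
  have hsl : ∀ (i : Fin n), (i:ℕ)+1 = n → s i.succ = 1 := by
    intro i h
    have : i.succ = Fin.last n := by ext; simp [h]
    rw [this, hslast]
  rw [lh19.mem_lhPar_iff s hs x]
  constructor
  · rintro ⟨⟨h00, h01⟩, hP⟩
    rw [hs0] at h01
    refine ⟨?_, ?_, ?_⟩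
    · have : (⟨0, by omega⟩ : Fin (n+1)) = 0 := rfl
      rw [this]; omega
    · intro i hi
      have := hP ⟨i, by omega⟩
      rw [hsc, hss ⟨i, by omega⟩ hi] at this
      simp only [Fin.succ_mk, Fin.castSucc_mk] at this
      convert this using 3 <;> push_cast <;> ring
    · intro hn
      have H := hP ⟨n-1, by omega⟩
      rw [hsc, hsl ⟨n-1, by omega⟩ (by simp; omega)] at H
      have e1 : ((⟨n-1, by omega⟩ : Fin n).succ : Fin (n+1)) = ⟨n, by omega⟩ := by
        apply Fin.ext; simp; omega
      have e2 : ((⟨n-1, by omega⟩ : Fin n).castSucc : Fin (n+1)) = ⟨n-1, by omega⟩ := by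
        apply Fin.ext; simp
      rw [e1, e2] at H
      simp only [Fin.val_mk, Nat.cast_one, one_mul, mul_one, Nat.sub_add_cancel hn] at H
      exact H
  · rintro ⟨h0, hstep, hlast⟩
    refine ⟨⟨?_, ?_⟩, ?_⟩
    · have : (0 : Fin (n+1)) = ⟨0, by omega⟩ := rfl
      rw [this, h0]
    · rw [hs0]
      have : (0 : Fin (n+1)) = ⟨0, by omega⟩ := rfl
      rw [this, h0]; omega
    · intro i
      rcases lt_or_eq_of_le (Nat.succ_le_of_lt i.isLt) with hi | hi
      · have := hstep i.val hi
        rw [hsc, hss i hi]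
        have e1 : (i.succ : Fin (n+1)) = ⟨i.val+1, by omega⟩ := rfl
        have e2 : (i.castSucc : Fin (n+1)) = ⟨i.val, by omega⟩ := rfl
        rw [e1, e2]
        convert this using 3 <;> push_cast <;> ring
      · have hn : 0 < n := by omega
        have H := hlast hn
        rw [hsc, hsl i (by omega)]
        have e1 : (i.succ : Fin (n+1)) = ⟨n, by omega⟩ := by
          apply Fin.ext; simp; omega
        have e2 : (i.castSucc : Fin (n+1)) = ⟨n-1, by omega⟩ := by
          apply Fin.ext; simp; omega
        rw [e1, e2]
        have e3 : (i.val : ℕ) + 1 = n := by omega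
        simp only [Nat.cast_one, one_mul, mul_one, e3]
        exact H

lemma lh19.step_bounds (m z z' : ℤ) (hm : 0 ≤ m) (hz0 : 0 ≤ z) (hz1 : z ≤ m)
    (hz'0 : 0 ≤ z') (hz'1 : z' ≤ m + 1) :
    0 ≤ (m+1)*(m+2)*(if z < z' then 1 else 0) - (m+1)*z' + (m+2)*z ∧
    (m+1)*(m+2)*(if z < z' then 1 else 0) - (m+1)*z' + (m+2)*z < (m+1)*(m+2) := by
  split_ifs with h
  · constructor <;> nlinarith
  · push_neg at h
    constructor <;> nlinarith

lemma lh19.step_unique (m z z' d : ℤ) (hm : 0 ≤ m) (hz0 : 0 ≤ z) (hz1 : z ≤ m)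
    (hz'0 : 0 ≤ z') (hz'1 : z' ≤ m + 1)
    (h1 : 0 ≤ (m+1)*(m+2)*d - (m+1)*z' + (m+2)*z)
    (h2 : (m+1)*(m+2)*d - (m+1)*z' + (m+2)*z < (m+1)*(m+2)) :
    d = if z < z' then 1 else 0 := by
  obtain ⟨b1, b2⟩ := lh19.step_bounds m z z' hm hz0 hz1 hz'0 hz'1
  set e : ℤ := if z < z' then 1 else 0 with he
  have hM : 0 < (m+1)*(m+2) := by nlinarith
  have h3 : (m+1)*(m+2)*(d - e) < (m+1)*(m+2)*1 := by nlinarith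
  have h4 : (m+1)*(m+2)*(-1) < (m+1)*(m+2)*(d - e) := by nlinarith
  have := lt_of_mul_lt_mul_left h3 hM.le
  have := lt_of_mul_lt_mul_left h4 hM.le
  omega

lemma lh19.emod_decomp (m y : ℤ) (hm : 0 < m) :
    y = m * ((y + (-y) % m) / m) - (-y) % m := by
  have hdvd : m ∣ y + (-y) % m := by
    refine ⟨-((-y)/m), ?_⟩
    rw [Int.emod_def]
    ring
  rw [Int.mul_ediv_cancel' hdvd]
  ring

lemma lh19.zb (y m : ℤ) (hm : 0 < m) : 0 ≤ (-y) % m ∧ (-y) % m < m :=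
  ⟨Int.emod_nonneg _ hm.ne', Int.emod_lt_of_pos _ hm⟩

lemma lh19.core (n : ℕ) (Y : ℕ → ℤ) (h0 : Y 0 = 0)
    (hstep : ∀ i : ℕ, i + 1 < n →
      0 ≤ ((i:ℤ)+1)*Y (i+1) - ((i:ℤ)+2)*Y i ∧
      ((i:ℤ)+1)*Y (i+1) - ((i:ℤ)+2)*Y i < ((i:ℤ)+1)*((i:ℤ)+2)) :
    ∀ m, m < n →
      Y m = ((m:ℤ)+1) * (((Finset.range m).filter
        (fun i => (-Y i) % ((i:ℤ)+1) < (-Y (i+1)) % ((i:ℤ)+2))).card : ℤ)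
        - (-Y m) % ((m:ℤ)+1) := by
  intro m
  induction m with
  | zero =>
    intro _
    simp [h0]
  | succ m ih =>
    intro hm1
    have hm : m < n := by omega
    have IH := ih hm
    set z : ℤ := (-Y m) % ((m:ℤ)+1) with hz
    set z' : ℤ := (-Y (m+1)) % ((m:ℤ)+2) with hz'
    obtain ⟨hz0, hz1⟩ := lh19.zb (Y m) ((m:ℤ)+1) (by positivity)
    obtain ⟨hz'0, hz'1⟩ := lh19.zb (Y (m+1)) ((m:ℤ)+2) (by positivity)
    set a : ℤ := (((Finset.range m).filter
        (fun i => (-Y i) % ((i:ℤ)+1) < (-Y (i+1)) % ((i:ℤ)+2))).card : ℤ) with ha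
    have hdec := lh19.emod_decomp ((m:ℤ)+2) (Y (m+1)) (by positivity)
    set A' : ℤ := (Y (m+1) + (-Y (m+1)) % ((m:ℤ)+2)) / ((m:ℤ)+2) with hA'
    have hY1 : Y (m+1) = ((m:ℤ)+2) * A' - z' := hdec
    obtain ⟨e1, e2⟩ := hstep m hm1
    have key : A' - a = if z < z' then 1 else 0 := by
      apply lh19.step_unique (m:ℤ) z z' _ (Int.natCast_nonneg m) hz0 (by omega) hz'0 (by omega)
      · nlinarith [e1, hY1, IH]
      · nlinarith [e2, hY1, IH]
    have hcard : (((Finset.range (m+1)).filter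
        (fun i => (-Y i) % ((i:ℤ)+1) < (-Y (i+1)) % ((i:ℤ)+2))).card : ℤ)
        = a + if z < z' then 1 else 0 := by
      rw [Finset.range_add_one, Finset.filter_insert]
      split_ifs with h
      · rw [Finset.card_insert_of_notMem (by simp), ha]
        push_cast
        ring
      · simp [ha]
    rw [hcard]
    have : ((m+1 : ℕ) : ℤ) + 1 = (m:ℤ) + 2 := by push_cast; ring
    rw [this]
    rw [show (-Y (m+1)) % ((m:ℤ)+2) = z' from rfl]
    rw [hY1]
    nlinarith [key]

/-- The extension of `x` to `ℕ` indices. -/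
def lh19.Ynat (n : ℕ) (x : Fin (n+1) → ℤ) : ℕ → ℤ := fun i => x ⟨min i n, by omega⟩

lemma lh19.Ynat_eq (n : ℕ) (x : Fin (n+1) → ℤ) (i : ℕ) (h : i < n+1) :
    lh19.Ynat n x i = x ⟨i, h⟩ := by
  unfold lh19.Ynat
  congr 1
  apply Fin.ext
  simp
  omega

lemma lh19.conds (n : ℕ) (x : Fin (n+1) → ℤ)
    (hmem : (fun k => (x k : ℝ)) ∈ lhPar (Fin.snoc (fun i : Fin n => (i:ℕ)+1) 1)) :
    lh19.Ynat n x 0 = 0 ∧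
    (∀ i : ℕ, i + 1 < n →
      0 ≤ ((i:ℤ)+1) * lh19.Ynat n x (i+1) - ((i:ℤ)+2) * lh19.Ynat n x i ∧
      ((i:ℤ)+1) * lh19.Ynat n x (i+1) - ((i:ℤ)+2) * lh19.Ynat n x i < ((i:ℤ)+1)*((i:ℤ)+2)) ∧
    (0 < n →
      0 ≤ (n:ℤ) * lh19.Ynat n x n - lh19.Ynat n x (n-1) ∧
      (n:ℤ) * lh19.Ynat n x n - lh19.Ynat n x (n-1) < (n:ℤ)) := by
  rw [lh19.mem_iff'] at hmem
  obtain ⟨h0, hstep, hlast⟩ := hmem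
  refine ⟨?_, ?_, ?_⟩
  · rw [lh19.Ynat_eq n x 0 (by omega)]; exact h0
  · intro i hi
    rw [lh19.Ynat_eq n x (i+1) (by omega), lh19.Ynat_eq n x i (by omega)]
    exact hstep i hi
  · intro hn
    rw [lh19.Ynat_eq n x n (by omega), lh19.Ynat_eq n x (n-1) (by omega)]
    exact hlast hn

lemma lh19.lastVal (n : ℕ) (hn : 0 < n) (x : Fin (n+1) → ℤ)
    (hmem : (fun k => (x k : ℝ)) ∈ lhPar (Fin.snoc (fun i : Fin n => (i:ℕ)+1) 1)) :
    x (Fin.last n) = (((Finset.range (n-1)).filter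
      (fun i => (-(lh19.Ynat n x i)) % ((i:ℤ)+1)
        < (-(lh19.Ynat n x (i+1))) % ((i:ℤ)+2))).card : ℤ) := by
  obtain ⟨h0, hstep, hlast⟩ := lh19.conds n x hmem
  set Y := lh19.Ynat n x with hY
  have hcore := lh19.core n Y h0 hstep (n-1) (by omega)
  set C : ℤ := (((Finset.range (n-1)).filter
      (fun i => (-Y i) % ((i:ℤ)+1) < (-Y (i+1)) % ((i:ℤ)+2))).card : ℤ) with hC
  simp only [Nat.cast_sub hn, Nat.cast_one] at hcore
  have e3 : ((n:ℤ) - 1) + 1 = (n:ℤ) := by ring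
  rw [e3] at hcore
  obtain ⟨l1, l2⟩ := hlast hn
  obtain ⟨zb1, zb2⟩ := lh19.zb (Y (n-1)) (n:ℤ) (by exact_mod_cast hn)
  have hxl : x (Fin.last n) = Y n := (lh19.Ynat_eq n x n (by omega)).symm
  rw [hxl]
  have h3 : (n:ℤ) * (Y n - C) < (n:ℤ) * 1 := by nlinarith [hcore]
  have h4 : (n:ℤ) * (-1) < (n:ℤ) * (Y n - C) := by nlinarith [hcore]
  have hN : (0:ℤ) < n := by exact_mod_cast hn
  have := lt_of_mul_lt_mul_left h3 hN.le
  have := lt_of_mul_lt_mul_left h4 hN.le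
  omega

lemma lh19.rAsc_eq (n : ℕ) (Y : ℕ → ℤ) :
    rAsc (fun i : Fin n => (-Y i.val) % ((i.val:ℤ)+1)) =
    ((Finset.range (n-1)).filter
      (fun i => (-Y i) % ((i:ℤ)+1) < (-Y (i+1)) % ((i:ℤ)+2))).card := by
  unfold rAsc
  have hset : {i : Fin n | ∃ h : (i:ℕ)+1 < n,
      (fun i : Fin n => (-Y i.val) % ((i.val:ℤ)+1)) i
        < (fun i : Fin n => (-Y i.val) % ((i.val:ℤ)+1)) ⟨(i:ℕ)+1, h⟩}
      = {i : Fin n | (i.val+1 < n ∧ (-Y i.val) % ((i.val:ℤ)+1) < (-Y (i.val+1)) % ((i.val:ℤ)+2))} := by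
    ext i
    simp only [Set.mem_setOf_eq, exists_prop]
    have e : ∀ i : ℕ, (((i+1 : ℕ):ℤ)) + 1 = (i:ℤ)+2 := by intro i; push_cast; ring
    constructor
    · rintro ⟨h, hlt⟩
      refine ⟨h, ?_⟩
      simp only [Fin.val_mk, e] at hlt
      exact hlt
    · rintro ⟨h, hlt⟩
      refine ⟨h, ?_⟩
      simp only [Fin.val_mk, e]
      exact hlt
  rw [hset, lh19.ncard_setOf_fin (fun i : ℕ => i+1 < n ∧ (-Y i) % ((i:ℤ)+1) < (-Y (i+1)) % ((i:ℤ)+2))]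
  congr 1
  ext i
  simp only [Finset.mem_filter, Finset.mem_range]
  omega

lemma lh19.rDes_eq (n : ℕ) (Y : ℕ → ℤ) :
    rDes (fun i : Fin n => (-Y (n-1-i.val)) % (((n-1-i.val : ℕ):ℤ)+1)) =
    ((Finset.range (n-1)).filter
      (fun i => (-Y i) % ((i:ℤ)+1) < (-Y (i+1)) % ((i:ℤ)+2))).card := by
  unfold rDes
  have hset : {i : Fin n | ∃ h : (i:ℕ)+1 < n,
      (fun i : Fin n => (-Y (n-1-i.val)) % (((n-1-i.val : ℕ):ℤ)+1)) ⟨(i:ℕ)+1, h⟩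
        < (fun i : Fin n => (-Y (n-1-i.val)) % (((n-1-i.val : ℕ):ℤ)+1)) i}
      = {i : Fin n | (i.val+1 < n ∧
          (-Y (n-2-i.val)) % (((n-2-i.val : ℕ):ℤ)+1) < (-Y (n-1-i.val)) % (((n-1-i.val : ℕ):ℤ)+1))} := by
    ext i
    simp only [Set.mem_setOf_eq, exists_prop]
    constructor
    · rintro ⟨h, hlt⟩
      refine ⟨h, ?_⟩
      have e : n-1-((i:ℕ)+1) = n-2-(i:ℕ) := by omega
      simp only [Fin.val_mk, e] at hlt
      exact hlt
    · rintro ⟨h, hlt⟩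
      refine ⟨h, ?_⟩
      have e : n-1-((i:ℕ)+1) = n-2-(i:ℕ) := by omega
      simp only [Fin.val_mk, e]
      exact hlt
  rw [hset, lh19.ncard_setOf_fin (fun i : ℕ => i+1 < n ∧
      (-Y (n-2-i)) % (((n-2-i : ℕ):ℤ)+1) < (-Y (n-1-i)) % (((n-1-i : ℕ):ℤ)+1))]
  apply Finset.card_nbij' (fun i => n-2-i) (fun j => n-2-j)
  · intro a ha
    simp only [Finset.mem_coe, Finset.mem_filter, Finset.mem_range] at ha ⊢
    obtain ⟨_, h1, hlt⟩ := ha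
    refine ⟨by omega, ?_⟩
    simp only [show n-1-a = n-2-a+1 from by omega] at hlt
    have e7 : ((n-2-a:ℕ):ℤ)+2 = ((n-2-a+1:ℕ):ℤ)+1 := by push_cast; ring
    rw [e7]
    exact hlt
  · intro a ha
    simp only [Finset.mem_coe, Finset.mem_filter, Finset.mem_range] at ha ⊢
    obtain ⟨h1, hlt⟩ := ha
    refine ⟨by omega, by omega, ?_⟩
    have e1 : n-2-(n-2-a) = a := by omega
    have e2 : n-1-(n-2-a) = a+1 := by omega
    have e3 : (((a+1 : ℕ):ℤ)) = (a:ℤ)+1 := by push_cast; ring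
    simp only [e1, e2, e3]
    have e4 : ((a:ℤ)+1)+1 = (a:ℤ)+2 := by ring
    rw [e4]
    exact hlt
  · intro a ha
    simp only [Finset.mem_coe, Finset.mem_filter, Finset.mem_range] at ha
    dsimp only; omega
  · intro a ha
    simp only [Finset.mem_coe, Finset.mem_filter, Finset.mem_range] at ha
    dsimp only; omega

lemma lh19.emod_back (m a z : ℤ) (h0 : 0 ≤ z) (h1 : z < m) : (-(m * a - z)) % m = z := by
  have e : -(m*a - z) = z + m * (-a) := by ring
  rw [e, Int.add_mul_emod_self_left, Int.emod_eq_of_lt h0 h1]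

/-- for `s = (1,2,…,n)` and `x ∈ Par_{s*} ∩ ℤ^{n+1}` with
`z_i = (−x_i) mod i`, the last coordinate of `x` equals `asc(z)` and
`des(reverse(z))`; moreover `x ↦ reverse(z)` is a bijection from
`Par_{s*} ∩ ℤ^{n+1}` onto the inversion sequences of length `n`. -/
theorem stmt_19 (n : ℕ) :
    (∀ x : Fin (n + 1) → ℤ,
      (fun k => (x k : ℝ)) ∈ lhPar (Fin.snoc (fun i : Fin n => (i : ℕ) + 1) 1) →
      (x (Fin.last n) =
          (rAsc (fun i : Fin n => (-(x i.castSucc)) % (((i : ℕ) : ℤ) + 1)) : ℤ) ∧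
        x (Fin.last n) =
          (rDes (fun i : Fin n =>
            (-(x (Fin.rev i).castSucc)) % ((((Fin.rev i) : ℕ) : ℤ) + 1)) : ℤ))) ∧
    Set.BijOn
      (fun (x : Fin (n + 1) → ℤ) (i : Fin n) =>
        (-(x (Fin.rev i).castSucc)) % ((((Fin.rev i) : ℕ) : ℤ) + 1))
      {x : Fin (n + 1) → ℤ |
        (fun k => (x k : ℝ)) ∈ lhPar (Fin.snoc (fun i : Fin n => (i : ℕ) + 1) 1)}
      {r : Fin n → ℤ | ∀ k : Fin n, 0 ≤ r k ∧ r k + ((k : ℕ) : ℤ) < (n : ℤ)} := by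
  rcases Nat.eq_zero_or_pos n with hn | hn
  · subst hn
    constructor
    · intro x hmem
      rw [lh19.mem_iff'] at hmem
      have h0 : x ⟨0, by omega⟩ = 0 := hmem.1
      have hA : rAsc (fun i : Fin 0 => (-(x i.castSucc)) % (((i : ℕ) : ℤ) + 1)) = 0 := by
        unfold rAsc
        rw [Set.eq_empty_of_isEmpty {i : Fin 0 | _}, Set.ncard_empty]
      have hD : rDes (fun i : Fin 0 =>
          (-(x (Fin.rev i).castSucc)) % ((((Fin.rev i) : ℕ) : ℤ) + 1)) = 0 := by
        unfold rDes
        rw [Set.eq_empty_of_isEmpty {i : Fin 0 | _}, Set.ncard_empty]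
      rw [hA, hD]
      exact ⟨h0, h0⟩
    · refine ⟨?_, ?_, ?_⟩
      · intro x _ k
        exact k.elim0
      · intro x hx y hy _
        rw [Set.mem_setOf_eq, lh19.mem_iff'] at hx hy
        funext k
        have hk : k = ⟨0, by omega⟩ := by apply Fin.ext; omega
        rw [hk, hx.1, hy.1]
      · intro r _
        refine ⟨fun _ => 0, ?_, ?_⟩
        · rw [Set.mem_setOf_eq, lh19.mem_iff']
          refine ⟨rfl, fun i hi => by omega, fun h => by omega⟩
        · funext k
          exact k.elim0
  · constructor
    · -- part 1
      intro x hmem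
      have hlv := lh19.lastVal n hn x hmem
      constructor
      · have hz : (fun i : Fin n => (-(x i.castSucc)) % (((i : ℕ) : ℤ) + 1))
            = fun i : Fin n => (-(lh19.Ynat n x i.val)) % ((i.val:ℤ)+1) := by
          funext i
          rw [lh19.Ynat_eq n x i.val (by omega)]
          rfl
        rw [hz, lh19.rAsc_eq n (lh19.Ynat n x)]
        exact hlv
      · have hz : (fun i : Fin n => (-(x (Fin.rev i).castSucc)) % ((((Fin.rev i) : ℕ) : ℤ) + 1))
            = fun i : Fin n => (-(lh19.Ynat n x (n-1-i.val))) % (((n-1-i.val : ℕ):ℤ)+1) := by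
          funext i
          have hv : ((Fin.rev i : Fin n) : ℕ) = n-1-(i:ℕ) := by
            rw [Fin.val_rev]; omega
          have hx : x (Fin.rev i).castSucc = lh19.Ynat n x (n-1-(i:ℕ)) := by
            rw [lh19.Ynat_eq n x (n-1-(i:ℕ)) (by omega)]
            congr 1
            apply Fin.ext
            simp
            omega
          rw [hx, hv]
        rw [hz, lh19.rDes_eq n (lh19.Ynat n x)]
        exact hlv
    · refine ⟨?_, ?_, ?_⟩
      · -- MapsTo
        intro x _ k
        simp only [Set.mem_setOf_eq]
        obtain ⟨b1, b2⟩ := lh19.zb (x (Fin.rev k).castSucc)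
          ((((Fin.rev k : Fin n) : ℕ):ℤ)+1) (by positivity)
        refine ⟨b1, ?_⟩
        have hv : ((Fin.rev k : Fin n) : ℕ) = n-1-(k:ℕ) := by
          rw [Fin.val_rev]; omega
        have hk := k.isLt
        rw [hv] at b2
        show (-(x (Fin.rev k).castSucc)) % ((((Fin.rev k : Fin n) : ℕ):ℤ)+1) + ((k:ℕ):ℤ) < (n:ℤ)
        rw [hv]
        omega
      · -- InjOn
        intro x hx y hy heq
        rw [Set.mem_setOf_eq] at hx hy
        have hZ : ∀ i : ℕ, (h : i < n) →
            (-(x ⟨i, by omega⟩)) % ((i:ℤ)+1) = (-(y ⟨i, by omega⟩)) % ((i:ℤ)+1) := by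
          intro i h
          have := congrFun heq (Fin.rev ⟨i, h⟩)
          simp only [Fin.rev_rev] at this
          exact this
        obtain ⟨hx0, hxstep, hxlast⟩ := lh19.conds n x hx
        obtain ⟨hy0, hystep, hylast⟩ := lh19.conds n y hy
        have hZ' : ∀ i : ℕ, i < n →
            (-(lh19.Ynat n x i)) % ((i:ℤ)+1) = (-(lh19.Ynat n y i)) % ((i:ℤ)+1) := by
          intro i h
          rw [lh19.Ynat_eq n x i (by omega), lh19.Ynat_eq n y i (by omega)]
          exact hZ i h
        have key : ∀ i, i ≤ n → lh19.Ynat n x i = lh19.Ynat n y i := by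
          intro i
          induction i with
          | zero => intro _; rw [hx0, hy0]
          | succ i ih =>
            intro hi1
            have hih := ih (by omega)
            rcases lt_or_eq_of_le hi1 with hlt | heqn
            · -- i+1 < n
              obtain ⟨a1, a2⟩ := hxstep i hlt
              obtain ⟨b1', b2'⟩ := hystep i hlt
              have hdvd : ((i:ℤ)+2) ∣ (lh19.Ynat n x (i+1) - lh19.Ynat n y (i+1)) := by
                have hmod := hZ' (i+1) hlt
                have e : (((i+1:ℕ)):ℤ)+1 = (i:ℤ)+2 := by push_cast; ring
                rw [e] at hmod
                have := Int.ModEq.dvd (hmod : Int.ModEq ((i:ℤ)+2) _ _)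
                have e2 : -lh19.Ynat n y (i+1) - -lh19.Ynat n x (i+1)
                    = lh19.Ynat n x (i+1) - lh19.Ynat n y (i+1) := by ring
                rwa [e2] at this
              obtain ⟨t, ht⟩ := hdvd
              have hM : (0:ℤ) < ((i:ℤ)+1)*((i:ℤ)+2) := by positivity
              have h3 : ((i:ℤ)+1)*((i:ℤ)+2)*t < ((i:ℤ)+1)*((i:ℤ)+2)*1 := by
                nlinarith [ht, hih]
              have h4 : ((i:ℤ)+1)*((i:ℤ)+2)*(-1) < ((i:ℤ)+1)*((i:ℤ)+2)*t := by
                nlinarith [ht, hih]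
              have t1 := lt_of_mul_lt_mul_left h3 hM.le
              have t2 := lt_of_mul_lt_mul_left h4 hM.le
              have : t = 0 := by omega
              rw [this, mul_zero] at ht
              linarith [ht]
            · -- i+1 = n
              obtain ⟨a1, a2⟩ := hxlast hn
              obtain ⟨b1', b2'⟩ := hylast hn
              have hi : i = n - 1 := by omega
              rw [← hi] at a1 a2 b1' b2'
              rw [heqn]
              rw [hih] at a1 a2
              have hN : (0:ℤ) < (n:ℤ) := by exact_mod_cast hn
              have h3 : (n:ℤ)*(lh19.Ynat n x n - lh19.Ynat n y n) < (n:ℤ)*1 := by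
                nlinarith
              have h4 : (n:ℤ)*(-1) < (n:ℤ)*(lh19.Ynat n x n - lh19.Ynat n y n) := by
                nlinarith
              have t1 := lt_of_mul_lt_mul_left h3 hN.le
              have t2 := lt_of_mul_lt_mul_left h4 hN.le
              omega
        funext k
        have h1 : x k = lh19.Ynat n x k.val := by
          rw [lh19.Ynat_eq n x k.val k.isLt]
        have h2 : y k = lh19.Ynat n y k.val := by
          rw [lh19.Ynat_eq n y k.val k.isLt]
        rw [h1, h2, key k.val (by omega)]
      · -- SurjOn
        intro r hr
        rw [Set.mem_setOf_eq] at hr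
        set Z : ℕ → ℤ := fun i => if h : i < n then r ⟨n-1-i, by omega⟩ else 0 with hZdef
        have hZb : ∀ i, i < n → 0 ≤ Z i ∧ Z i ≤ (i:ℤ) := by
          intro i h
          obtain ⟨c1, c2⟩ := hr ⟨n-1-i, by omega⟩
          simp only [hZdef, dif_pos h]
          simp only [Fin.val_mk] at c2
          constructor
          · exact c1
          · omega
        set A : ℕ → ℤ := fun m => (((Finset.range m).filter
            (fun i => Z i < Z (i+1))).card : ℤ) with hAdef
        have hA0 : A 0 = 0 := by simp [hAdef]
        have hAstep : ∀ i, A (i+1) = A i + if Z i < Z (i+1) then 1 else 0 := by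
          intro i
          simp only [hAdef, Finset.range_add_one, Finset.filter_insert]
          split_ifs with h
          · rw [Finset.card_insert_of_notMem (by simp)]
            push_cast; ring
          · simp
        set x : Fin (n+1) → ℤ := fun k =>
          if h : (k:ℕ) < n then (((k:ℕ):ℤ)+1) * A k - Z k else A (n-1) with hxdef
        have hxval : ∀ i : ℕ, (h : i < n) →
            x ⟨i, by omega⟩ = ((i:ℤ)+1) * A i - Z i := by
          intro i h
          simp only [hxdef, Fin.val_mk, dif_pos h]
        have hxn : x ⟨n, by omega⟩ = A (n-1) := by
          simp only [hxdef, Fin.val_mk, dif_neg (lt_irrefl n)]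
        have hZ0 : Z 0 = 0 := by
          obtain ⟨c1, c2⟩ := hZb 0 hn
          omega
        refine ⟨x, ?_, ?_⟩
        · rw [Set.mem_setOf_eq, lh19.mem_iff']
          refine ⟨?_, ?_, ?_⟩
          · rw [hxval 0 hn, hZ0, hA0]
            ring
          · intro i hi
            rw [hxval (i+1) hi, hxval i (by omega)]
            obtain ⟨c1, c2⟩ := hZb i (by omega)
            obtain ⟨d1, d2⟩ := hZb (i+1) hi
            obtain ⟨sb1, sb2⟩ := lh19.step_bounds (i:ℤ) (Z i) (Z (i+1))
              (Int.natCast_nonneg i) c1 c2 d1 (by push_cast at d2 ⊢; omega)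
            have hAs := hAstep i
            have e : (((i+1:ℕ)):ℤ) = (i:ℤ)+1 := by push_cast; ring
            rw [e]
            constructor
            · nlinarith [sb1, hAs]
            · nlinarith [sb2, hAs]
          · intro _
            rw [hxn, hxval (n-1) (by omega)]
            obtain ⟨c1, c2⟩ := hZb (n-1) (by omega)
            have e : (((n-1:ℕ)):ℤ)+1 = (n:ℤ) := by omega
            rw [e]
            constructor
            · nlinarith
            · nlinarith
        · funext k
          have hv : ((Fin.rev k : Fin n) : ℕ) = n-1-(k:ℕ) := by
            rw [Fin.val_rev]; omega
          have hcs : (Fin.rev k).castSucc = (⟨n-1-(k:ℕ), by omega⟩ : Fin (n+1)) := by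
            apply Fin.ext
            simp
            omega
          show (-(x (Fin.rev k).castSucc)) % ((((Fin.rev k : Fin n) : ℕ):ℤ)+1) = r k
          rw [hcs]
          simp only [hv]
          rw [hxval (n-1-(k:ℕ)) (by omega)]
          obtain ⟨c1, c2⟩ := hZb (n-1-(k:ℕ)) (by omega)
          rw [lh19.emod_back _ _ _ c1 (by omega)]
          simp only [hZdef, dif_pos (show n-1-(k:ℕ) < n by omega)]
          congr 1
          apply Fin.ext
          simp
          omega
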